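/- Let D be a semi-complete digraph on n vertices, and let π and σ be vertex orderings of D with ctw(D, σ) ≤ ctw(D, π) = c. Suppose m ∈ [3c, n − 3c] is such that in D there exists a family of |E^m_π| pairwise arc-disjoint directed paths leading from the set of the last n − (m + 3c) vertices of π to the set of the first m − 3c vertices of π. Then there exists a vertex ordering σ* of D such that: (1) the set of the first m vertices of σ* equals the set of the first m vertices of π; (2) for every position j with j ≤ m − 3c or j > m + 3c, the vertex at position j in σ* equals the vertex at position j in σ; and (3) ctw(D, σ*) ≤ ctw(D, σ). -/

import Mathlib

open Finset

variable {V : Type*} [Fintype V] [DecidableEq V]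

/-- The set of the first `i` vertices in the vertex ordering `π`. -/
def prefixSet (π : V ≃ Fin (Fintype.card V)) (i : ℕ) : Finset V :=
  Finset.univ.filter (fun v => (π v : ℕ) < i)

/-- The set of the last `n - i` vertices in the vertex ordering `π`. -/
def suffixSet (π : V ≃ Fin (Fintype.card V)) (i : ℕ) : Finset V :=
  Finset.univ.filter (fun v => i ≤ (π v : ℕ))

/-- The cut at position `i`: the arcs from outside the length-`i` prefix into the prefix. -/
def cutFinset (E : V → V → Prop) [DecidableRel E]
    (π : V ≃ Fin (Fintype.card V)) (i : ℕ) : Finset (V × V) :=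
  Finset.univ.filter (fun p : V × V => E p.1 p.2 ∧ i ≤ (π p.1 : ℕ) ∧ (π p.2 : ℕ) < i)

/-- The size of the cut at position `i`. -/
def cutSize (E : V → V → Prop) [DecidableRel E]
    (π : V ≃ Fin (Fintype.card V)) (i : ℕ) : ℕ :=
  (cutFinset E π i).card

/-- The width of a vertex ordering. -/
def widthOf (E : V → V → Prop) [DecidableRel E] (π : V ≃ Fin (Fintype.card V)) : ℕ :=
  (Finset.range (Fintype.card V + 1)).sup (cutSize E π)

/-- The cutwidth of a digraph. -/
noncomputable def cutwidth (E : V → V → Prop) [DecidableRel E] : ℕ :=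
  sInf {w | ∃ π : V ≃ Fin (Fintype.card V), widthOf E π = w}

/-- The OLA-cost of a vertex ordering. -/
def olaOf (E : V → V → Prop) [DecidableRel E] (π : V ≃ Fin (Fintype.card V)) : ℕ :=
  ∑ i ∈ Finset.range (Fintype.card V + 1), cutSize E π i

/-- The OLA-cost of a digraph. -/
noncomputable def ola (E : V → V → Prop) [DecidableRel E] : ℕ :=
  sInf {w | ∃ π : V ≃ Fin (Fintype.card V), olaOf E π = w}

/-- The arcs of a path given as a list of vertices. -/
def pathArcs (l : List V) : List (V × V) := l.zip l.tail

/-- `l` is a directed path (walk) from `u` to `v` in the digraph `E`. -/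
def IsPath (E : V → V → Prop) (u v : V) (l : List V) : Prop :=
  l.head? = some u ∧ l.getLast? = some v ∧ List.Chain' E l

/-! ### Auxiliary machinery for `save_milestone` -/

section SaveMilestoneAux

set_option linter.unusedSectionVars false
set_option maxHeartbeats 1000000

lemma sm_fin_filter_lt_card {N j : ℕ} (hj : j ≤ N) :
    ((univ : Finset (Fin N)).filter fun (k : Fin N) => (k : ℕ) < j).card = j := by
  have : ((univ : Finset (Fin N)).filter fun (k : Fin N) => (k : ℕ) < j) =
      (Finset.range j).attachFin (fun m hm => lt_of_lt_of_le (Finset.mem_range.mp hm) hj) := by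
    ext k; simp [Finset.mem_attachFin]
  rw [this, Finset.card_attachFin, Finset.card_range]

lemma sm_fin_filter_band_card {N l r : ℕ} (hr : r ≤ N) :
    ((univ : Finset (Fin N)).filter fun (k : Fin N) => l ≤ (k : ℕ) ∧ (k : ℕ) < r).card = r - l := by
  have : ((univ : Finset (Fin N)).filter fun (k : Fin N) => l ≤ (k : ℕ) ∧ (k : ℕ) < r) =
      (Finset.Ico l r).attachFin (fun m hm => lt_of_lt_of_le (Finset.mem_Ico.mp hm).2 hr) := by
    ext k; simp [Finset.mem_attachFin]
  rw [this, Finset.card_attachFin, Nat.card_Ico]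

lemma sm_card_filter_comp {W : Type*} [Fintype W] [DecidableEq W] (τ : V ≃ W)
    (p : W → Prop) [DecidablePred p] :
    (univ.filter fun v => p (τ v)).card = (univ.filter p).card := by
  apply Finset.card_nbij' (fun v => τ v) (fun w => τ.symm w)
  · intro a ha; simpa using (Finset.mem_filter.mp ha).2
  · intro a ha; simp; simpa using (Finset.mem_filter.mp ha).2
  · intro a _; simp
  · intro a _; simp

lemma sm_card_filter_lt (τ : V ≃ Fin (Fintype.card V)) {j : ℕ} (hj : j ≤ Fintype.card V) :
    (univ.filter fun v => (τ v : ℕ) < j).card = j := by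
  rw [sm_card_filter_comp τ (fun (k : Fin (Fintype.card V)) => (k : ℕ) < j),
    sm_fin_filter_lt_card hj]

lemma sm_card_filter_band (τ : V ≃ Fin (Fintype.card V)) {l r : ℕ} (hr : r ≤ Fintype.card V) :
    (univ.filter fun v => l ≤ (τ v : ℕ) ∧ (τ v : ℕ) < r).card = r - l := by
  rw [sm_card_filter_comp τ (fun (k : Fin (Fintype.card V)) => l ≤ (k : ℕ) ∧ (k : ℕ) < r),
    sm_fin_filter_band_card hr]

/-- The set of arcs entering a vertex set `S`. -/
def dIn (E : V → V → Prop) [DecidableRel E] (S : Finset V) : Finset (V × V) :=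
  Finset.univ.filter (fun p : V × V => E p.1 p.2 ∧ p.1 ∉ S ∧ p.2 ∈ S)

lemma cutFinset_eq_dIn (E : V → V → Prop) [DecidableRel E] (τ : V ≃ Fin (Fintype.card V))
    (i : ℕ) : cutFinset E τ i = dIn E (prefixSet τ i) := by
  ext p; simp [cutFinset, dIn, prefixSet, not_lt]

lemma dIn_submod (E : V → V → Prop) [DecidableRel E] (S T : Finset V) :
    (dIn E (S ∩ T)).card + (dIn E (S ∪ T)).card ≤ (dIn E S).card + (dIn E T).card := by
  simp only [dIn, Finset.card_filter]
  rw [← Finset.sum_add_distrib, ← Finset.sum_add_distrib]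
  refine Finset.sum_le_sum fun p _ => ?_
  by_cases h1 : p.1 ∈ S <;> by_cases h2 : p.1 ∈ T <;> by_cases h3 : p.2 ∈ S <;>
    by_cases h4 : p.2 ∈ T <;> by_cases hE : E p.1 p.2 <;>
    simp [h1, h2, h3, h4, hE, Finset.mem_inter, Finset.mem_union]

lemma cutSize_le_width (E : V → V → Prop) [DecidableRel E] (τ : V ≃ Fin (Fintype.card V))
    {i : ℕ} (hi : i ≤ Fintype.card V) : cutSize E τ i ≤ widthOf E τ :=
  Finset.le_sup (Finset.mem_range.mpr (Nat.lt_succ_of_le hi))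

lemma sm_mem_cutFinset (E : V → V → Prop) [DecidableRel E] (τ : V ≃ Fin (Fintype.card V))
    (i : ℕ) (x y : V) (h1 : E x y) (h2 : i ≤ (τ x : ℕ)) (h3 : (τ y : ℕ) < i) :
    (x, y) ∈ cutFinset E τ i :=
  Finset.mem_filter.mpr ⟨Finset.mem_univ _, h1, h2, h3⟩

/-- **Key combinatorial lemma**: in a semicomplete digraph, two orderings of width at most `c`
admit no inversion of a pair whose positions in the first ordering differ by more than `3c`. -/
lemma sm_inv_lemma (E : V → V → Prop) [DecidableRel E]
    (hsc : ∀ u v : V, u ≠ v → E u v ∨ E v u) {c : ℕ}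
    (α β : V ≃ Fin (Fintype.card V))
    (hα : widthOf E α ≤ c) (hβ : widthOf E β ≤ c)
    {u w : V} (hgap : (α u : ℕ) + 3 * c < (α w : ℕ)) (hinv : (β w : ℕ) < (β u : ℕ)) :
    False := by
  have hwn : (α w : ℕ) < Fintype.card V := (α w).isLt
  have hbn : (β u : ℕ) < Fintype.card V := (β u).isLt
  have huw : u ≠ w := by
    intro h; rw [h] at hgap; omega
  set M : Finset V := univ.filter (fun x => (α u : ℕ) < (α x : ℕ) ∧ (α x : ℕ) < (α w : ℕ)) with hM
  have hMcard : M.card = (α w : ℕ) - (α u : ℕ) - 1 := by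
    have he : M = univ.filter fun v => (α u : ℕ) + 1 ≤ (α v : ℕ) ∧ (α v : ℕ) < (α w : ℕ) := by
      ext x; simp [hM]
    rw [he, sm_card_filter_band α (le_of_lt hwn)]; omega
  have huM : u ∉ M := by simp [hM]
  set M' : Finset V := insert u M with hM'
  have hM'card : M'.card = (α w : ℕ) - (α u : ℕ) := by
    rw [hM', Finset.card_insert_of_notMem huM, hMcard]; omega
  set T : Finset (V × V) :=
    (cutFinset E α ((α u : ℕ) + 1) ∪ cutFinset E α (α w : ℕ)) ∪ cutFinset E β (β u : ℕ)
    with hT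
  have hTcard : T.card ≤ 3 * c := by
    have b1 : (cutFinset E α ((α u : ℕ) + 1)).card ≤ c :=
      le_trans (cutSize_le_width E α (by omega)) hα
    have b2 : (cutFinset E α (α w : ℕ)).card ≤ c :=
      le_trans (cutSize_le_width E α (le_of_lt hwn)) hα
    have b3 : (cutFinset E β (β u : ℕ)).card ≤ c :=
      le_trans (cutSize_le_width E β (le_of_lt hbn)) hβ
    calc T.card ≤ (cutFinset E α ((α u : ℕ) + 1) ∪ cutFinset E α (α w : ℕ)).card
        + (cutFinset E β (β u : ℕ)).card := Finset.card_union_le _ _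
    _ ≤ ((cutFinset E α ((α u : ℕ) + 1)).card + (cutFinset E α (α w : ℕ)).card)
        + (cutFinset E β (β u : ℕ)).card :=
          Nat.add_le_add_right (Finset.card_union_le _ _) _
    _ ≤ (c + c) + c := Nat.add_le_add (Nat.add_le_add b1 b2) b3
    _ = 3 * c := by omega
  classical
  set f : V → V × V := fun x =>
    if x = u then (if E w u then (w, u) else (u, w))
    else if E x u then (x, u)
    else if E w x then (w, x)
    else if (β x : ℕ) < (β u : ℕ) then (u, x) else (x, w)
    with hf
  have hneu : ∀ x ∈ M, x ≠ u := by
    intro x hx h; rw [hM] at hx; simp at hx; rw [h] at hx; omega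
  have hnew : ∀ x ∈ M, x ≠ w := by
    intro x hx h; rw [hM] at hx; simp at hx; rw [h] at hx; omega
  have hmaps : ∀ x ∈ M', f x ∈ T := by
    intro x hx
    rcases Finset.mem_insert.mp hx with rfl | hxM
    · by_cases hwu : E w x
      · simp only [hf, if_pos rfl, if_pos hwu]
        exact Finset.mem_union_left _ (Finset.mem_union_left _
          (sm_mem_cutFinset E α _ _ _ hwu (by omega) (by omega)))
      · have hux : E x w := (hsc x w huw).resolve_right hwu
        simp only [hf, if_pos rfl, if_neg hwu]
        exact Finset.mem_union_right _
          (sm_mem_cutFinset E β _ _ _ hux (le_refl _) hinv)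
    · have h12 := (Finset.mem_filter.mp hxM).2
      have hxu := hneu x hxM
      have hxw := hnew x hxM
      simp only [hf, if_neg hxu]
      by_cases hxu' : E x u
      · simp only [if_pos hxu']
        exact Finset.mem_union_left _ (Finset.mem_union_left _
          (sm_mem_cutFinset E α _ _ _ hxu' (by omega) (by omega)))
      · simp only [if_neg hxu']
        by_cases hwx : E w x
        · simp only [if_pos hwx]
          exact Finset.mem_union_left _ (Finset.mem_union_right _
            (sm_mem_cutFinset E α _ _ _ hwx (le_refl _) h12.2))
        · simp only [if_neg hwx]
          have hux : E u x := (hsc u x (Ne.symm hxu)).resolve_right hxu'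
          have hxw' : E x w := (hsc x w hxw).resolve_right hwx
          by_cases hb : (β x : ℕ) < (β u : ℕ)
          · simp only [if_pos hb]
            exact Finset.mem_union_right _ (sm_mem_cutFinset E β _ _ _ hux (le_refl _) hb)
          · simp only [if_neg hb]
            exact Finset.mem_union_right _
              (sm_mem_cutFinset E β _ _ _ hxw' (by omega) hinv)
  have hshape : ∀ z ∈ M', f z = (z, u) ∨ f z = (w, z) ∨ f z = (u, z) ∨ f z = (z, w) := by
    intro z hz
    rcases Finset.mem_insert.mp hz with rfl | hzM
    · simp only [hf, if_pos rfl]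
      by_cases hwu : E w z
      · simp [hwu]
      · simp [hwu]
    · simp only [hf, if_neg (hneu z hzM)]
      by_cases h1 : E z u
      · simp [h1]
      · by_cases h2 : E w z
        · simp [h1, h2]
        · by_cases h3 : (β z : ℕ) < (β u : ℕ) <;> simp [h1, h2, h3]
  have hne_w : ∀ z ∈ M', z ≠ w := by
    intro z hz
    rcases Finset.mem_insert.mp hz with rfl | hzM
    · exact huw
    · exact hnew z hzM
  have hinj : ∀ x ∈ M', ∀ y ∈ M', f x = f y → x = y := by
    intro x hx y hy hfxy
    by_contra hne
    have hxw := hne_w x hx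
    have hyw := hne_w y hy
    rcases hshape x hx with h | h | h | h <;> rcases hshape y hy with h' | h' | h' | h' <;>
      rw [h, h'] at hfxy <;> simp only [Prod.mk.injEq] at hfxy <;>
      first
        | exact hne hfxy.1
        | exact hne hfxy.2
        | exact hxw hfxy.1
        | exact hxw hfxy.2
        | exact hyw hfxy.1.symm
        | exact hyw hfxy.2.symm
        | exact huw hfxy.1
        | exact huw hfxy.2
        | exact huw hfxy.1.symm
        | exact huw hfxy.2.symm
        | exact hne (hfxy.1.trans hfxy.2)
        | exact hne (hfxy.2.trans hfxy.1)
  have hle := Finset.card_le_card_of_injOn f hmaps hinj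
  rw [hM'card] at hle
  omega

/-- Displacement between two orderings of width ≤ c of a semicomplete digraph is at most 3c. -/
lemma sm_disp_lemma (E : V → V → Prop) [DecidableRel E]
    (hsc : ∀ u v : V, u ≠ v → E u v ∨ E v u) {c : ℕ}
    (α β : V ≃ Fin (Fintype.card V))
    (hα : widthOf E α ≤ c) (hβ : widthOf E β ≤ c) (v : V) :
    (α v : ℕ) ≤ (β v : ℕ) + 3 * c := by
  by_contra hcon
  push_neg at hcon
  set T : Finset V := univ.filter (fun x => (α x : ℕ) < (α v : ℕ) ∧ (β v : ℕ) < (β x : ℕ))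
    with hT
  have hvn : (α v : ℕ) < Fintype.card V := (α v).isLt
  have hsub : (univ.filter fun x => (α x : ℕ) < (α v : ℕ)) ⊆
      T ∪ (univ.filter fun x => (β x : ℕ) < (β v : ℕ)) := by
    intro x hx
    have hx' := (Finset.mem_filter.mp hx).2
    rcases lt_trichotomy ((β x : ℕ)) ((β v : ℕ)) with h | h | h
    · exact Finset.mem_union_right _ (Finset.mem_filter.mpr ⟨Finset.mem_univ _, h⟩)
    · exfalso
      have : x = v := β.injective (Fin.ext h)
      rw [this] at hx'; omega
    · exact Finset.mem_union_left _ (Finset.mem_filter.mpr ⟨Finset.mem_univ _, hx', h⟩)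
  have hcard1 : (univ.filter fun x => (α x : ℕ) < (α v : ℕ)).card = (α v : ℕ) :=
    sm_card_filter_lt α (le_of_lt hvn)
  have hcard2 : (univ.filter fun x => (β x : ℕ) < (β v : ℕ)).card = (β v : ℕ) :=
    sm_card_filter_lt β (le_of_lt (β v).isLt)
  have hTlow : (α v : ℕ) - (β v : ℕ) ≤ T.card := by
    have h1 := Finset.card_le_card hsub
    have hu := Finset.card_union_le T (univ.filter fun x => (β x : ℕ) < (β v : ℕ))
    rw [hcard1] at h1
    rw [hcard2] at hu
    omega
  have hex : ∃ x ∈ T, (α x : ℕ) + 3 * c < (α v : ℕ) := by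
    by_contra hno
    push_neg at hno
    have hsub2 : T ⊆ univ.filter fun x =>
        (α v : ℕ) - 3 * c ≤ (α x : ℕ) ∧ (α x : ℕ) < (α v : ℕ) := by
      intro x hx
      have h1 := (Finset.mem_filter.mp hx).2
      have h2 := hno x hx
      exact Finset.mem_filter.mpr ⟨Finset.mem_univ _, by omega, h1.1⟩
    have h3 := Finset.card_le_card hsub2
    rw [sm_card_filter_band α (le_of_lt hvn)] at h3
    omega
  obtain ⟨x, hxT, hxgap⟩ := hex
  have hxb := (Finset.mem_filter.mp hxT).2
  exact sm_inv_lemma E hsc α β hα hβ (u := x) (w := v) hxgap hxb.2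

lemma sm_chain'_pathArcs {E : V → V → Prop} :
    ∀ {l : List V}, List.Chain' E l → ∀ {p : V × V}, p ∈ l.zip l.tail → E p.1 p.2 := by
  intro l
  induction l with
  | nil => intro _ p hp; simp at hp
  | cons a l ih =>
    intro hch p hp
    cases l with
    | nil => simp at hp
    | cons b l' =>
      rw [show List.Chain' E (a :: b :: l') ↔ _ from List.isChain_cons_cons] at hch
      simp only [List.tail_cons, List.zip_cons_cons, List.mem_cons] at hp
      rcases hp with rfl | hp
      · exact hch.1
      · exact ih hch.2 hp

lemma sm_first_entry {S : Finset V} :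
    ∀ (l : List V) (s t : V), l.head? = some s → l.getLast? = some t →
      s ∉ S → t ∈ S → ∃ p : V × V, p ∈ l.zip l.tail ∧ p.1 ∉ S ∧ p.2 ∈ S := by
  intro l
  induction l with
  | nil => intro s t h; simp at h
  | cons a l ih =>
    intro s t hh hl hs ht
    have hsa : a = s := by simpa using hh
    subst hsa
    cases l with
    | nil =>
      simp at hl
      subst hl
      exact absurd ht hs
    | cons b l' =>
      by_cases hb : b ∈ S
      · exact ⟨(a, b), by simp, hs, hb⟩
      · have hl' : (b :: l').getLast? = some t := by
          rw [← List.getLast?_cons_cons (a := a)]; exact hl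
        obtain ⟨p, hp, h1, h2⟩ := ih b t rfl hl' hb ht
        refine ⟨p, ?_, h1, h2⟩
        simp only [List.tail_cons, List.zip_cons_cons, List.mem_cons]
        right
        simpa using hp

end SaveMilestoneAux

set_option linter.unusedSectionVars false in
set_option maxHeartbeats 4000000 in
/-- (Rearrangement lemma.) -/
theorem save_milestone (E : V → V → Prop) [DecidableRel E]
    (hirr : ∀ w : V, ¬ E w w)
    (hsc : ∀ u v : V, u ≠ v → E u v ∨ E v u)
    (π σ : V ≃ Fin (Fintype.card V)) (c : ℕ)
    (hπ : widthOf E π = c) (hσ : widthOf E σ ≤ c)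
    (m : ℕ) (hm₁ : 3 * c ≤ m) (hm₂ : m + 3 * c ≤ Fintype.card V)
    (P : Fin (cutSize E π m) → List V)
    (hP : ∀ i, ∃ s ∈ suffixSet π (m + 3 * c), ∃ t ∈ prefixSet π (m - 3 * c),
      IsPath E s t (P i))
    (hdisj : ∀ i j, i ≠ j → ∀ e : V × V, e ∈ pathArcs (P i) → e ∉ pathArcs (P j)) :
    ∃ σs : V ≃ Fin (Fintype.card V),
      prefixSet σs m = prefixSet π m ∧
      (∀ j : Fin (Fintype.card V),
        ((j : ℕ) + 1 ≤ m - 3 * c ∨ m + 3 * c < (j : ℕ) + 1) → σs.symm j = σ.symm j) ∧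
      widthOf E σs ≤ widthOf E σ := by
  classical
  have hπc : widthOf E π ≤ c := le_of_eq hπ
  have hmn : m ≤ Fintype.card V := by omega
  set PP : Finset V := prefixSet π m with hPPdef
  have hmemPP : ∀ v : V, v ∈ PP ↔ (π v : ℕ) < m := by
    intro v; simp [hPPdef, prefixSet]
  have hcardPP : PP.card = m := sm_card_filter_lt π hmn
  have dispπσ : ∀ v : V, (π v : ℕ) ≤ (σ v : ℕ) + 3 * c := sm_disp_lemma E hsc π σ hπc hσ
  have dispσπ : ∀ v : V, (σ v : ℕ) ≤ (π v : ℕ) + 3 * c := sm_disp_lemma E hsc σ π hσ hπc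
  have hA : ∀ v : V, (σ v : ℕ) < m - 3 * c → v ∈ PP := by
    intro v hv; rw [hmemPP]; have := dispπσ v; omega
  have hB : ∀ v : V, v ∈ PP → (σ v : ℕ) < m + 3 * c := by
    intro v hv; rw [hmemPP] at hv; have := dispσπ v; omega
  have hA' : ∀ v : V, (π v : ℕ) < m - 3 * c → (σ v : ℕ) < m := by
    intro v hv; have := dispσπ v; omega
  have hB' : ∀ v : V, m + 3 * c ≤ (π v : ℕ) → m ≤ (σ v : ℕ) := by
    intro v hv; have := dispπσ v; omega
  -- the cut of π at m is a minimum cut between the far suffix and the far prefix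
  have sep : ∀ S : Finset V,
      (∀ a : V, (π a : ℕ) < m - 3 * c → a ∈ S) →
      (∀ b : V, m + 3 * c ≤ (π b : ℕ) → b ∉ S) →
      cutSize E π m ≤ (dIn E S).card := by
    intro S hSA hSB
    have choice : ∀ i : Fin (cutSize E π m),
        ∃ p : V × V, p ∈ pathArcs (P i) ∧ E p.1 p.2 ∧ p.1 ∉ S ∧ p.2 ∈ S := by
      intro i
      obtain ⟨s, hs, t, ht, hh, hl, hch⟩ := hP i
      have hs' : m + 3 * c ≤ (π s : ℕ) := by simpa [suffixSet] using hs
      have ht' : (π t : ℕ) < m - 3 * c := by simpa [prefixSet] using ht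
      obtain ⟨p, hp, h1, h2⟩ := sm_first_entry (P i) s t hh hl (hSB s hs') (hSA t ht')
      exact ⟨p, hp, sm_chain'_pathArcs hch hp, h1, h2⟩
    choose g hg1 hg2 hg3 hg4 using choice
    have hginj : Function.Injective g := by
      intro i j hij
      by_contra hne
      exact hdisj i j hne (g i) (hg1 i) (hij ▸ hg1 j)
    have hmap : ∀ i : Fin (cutSize E π m), g i ∈ dIn E S := fun i =>
      Finset.mem_filter.mpr ⟨Finset.mem_univ _, hg2 i, hg3 i, hg4 i⟩
    calc cutSize E π m = (univ : Finset (Fin (cutSize E π m))).card := by simp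
    _ ≤ (dIn E S).card := Finset.card_le_card_of_injOn g (fun i _ => hmap i)
        (fun i _ j _ h => hginj h)
  have hdPP : dIn E PP = cutFinset E π m := (cutFinset_eq_dIn E π m).symm
  -- the new ordering: sort by (∉ PP, position in σ)
  set ord : V → ℕ := fun v => (if v ∈ PP then 0 else Fintype.card V) + (σ v : ℕ) with hord
  have hordP : ∀ v ∈ PP, ord v = (σ v : ℕ) := by
    intro v hv; simp [hord, hv]
  have hordN : ∀ v : V, v ∉ PP → ord v = Fintype.card V + (σ v : ℕ) := by
    intro v hv; simp [hord, hv]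
  have hord_inj : Function.Injective ord := by
    intro x y hxy
    by_cases hx : x ∈ PP <;> by_cases hy : y ∈ PP
    · apply σ.injective; apply Fin.ext
      rw [hordP x hx, hordP y hy] at hxy; exact hxy
    · exfalso; rw [hordP x hx, hordN y hy] at hxy
      have := (σ x).isLt; omega
    · exfalso; rw [hordN x hx, hordP y hy] at hxy
      have := (σ y).isLt; omega
    · apply σ.injective; apply Fin.ext
      rw [hordN x hx, hordN y hy] at hxy; omega
  letI : LinearOrder V := LinearOrder.lift' ord hord_inj
  have hlt : ∀ x y : V, x < y ↔ ord x < ord y := fun x y => Iff.rfl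
  let e : Fin (Fintype.card V) ≃o V := monoEquivOfFin V rfl
  set σs : V ≃ Fin (Fintype.card V) := e.toEquiv.symm with hσsdef
  have hσs_lt : ∀ x y : V, σs x < σs y ↔ ord x < ord y := by
    intro x y
    rw [← hlt]
    exact e.symm.lt_iff_lt
  have hpos : ∀ v : V, (σs v : ℕ) = (univ.filter fun u => ord u < ord v).card := by
    intro v
    have h1 : (univ.filter fun u => ord u < ord v) = (univ.filter fun u => σs u < σs v) := by
      apply Finset.filter_congr; intro u _; exact (hσs_lt u v).symm
    rw [h1, sm_card_filter_comp σs (fun k => k < σs v)]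
    have h2 : (univ.filter fun (k : Fin (Fintype.card V)) => k < σs v) =
        (univ.filter fun (k : Fin (Fintype.card V)) => (k : ℕ) < (σs v : ℕ)) := by
      apply Finset.filter_congr; intro k _; exact Fin.lt_def
    rw [h2, sm_fin_filter_lt_card (le_of_lt (σs v).isLt)]
  have hfact1 : ∀ v ∈ PP, (σs v : ℕ) < m := by
    intro v hv
    rw [hpos v]
    have hsub : (univ.filter fun u => ord u < ord v) ⊆ PP.erase v := by
      intro u hu
      have hu' := (Finset.mem_filter.mp hu).2
      have huP : u ∈ PP := by
        by_contra hun
        rw [hordN u hun, hordP v hv] at hu'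
        have := (σ v).isLt; omega
      refine Finset.mem_erase.mpr ⟨?_, huP⟩
      intro h; rw [h] at hu'; omega
    have hle := Finset.card_le_card hsub
    rw [Finset.card_erase_of_mem hv, hcardPP] at hle
    have hm0 : 0 < m := Nat.lt_of_le_of_lt (Nat.zero_le _) ((hmemPP v).mp hv)
    omega
  have hfact2 : ∀ v : V, v ∉ PP → m ≤ (σs v : ℕ) := by
    intro v hv
    rw [hpos v]
    have hsub : PP ⊆ (univ.filter fun u => ord u < ord v) := by
      intro u hu
      refine Finset.mem_filter.mpr ⟨Finset.mem_univ _, ?_⟩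
      rw [hordP u hu, hordN v hv]
      have := (σ u).isLt; omega
    have hle := Finset.card_le_card hsub
    rwa [hcardPP] at hle
  have hpre : prefixSet σs m = PP := by
    ext v
    simp only [prefixSet, Finset.mem_filter, Finset.mem_univ, true_and]
    constructor
    · intro h; by_contra hvn; exact absurd h (not_lt.mpr (hfact2 v hvn))
    · intro h; exact hfact1 v h
  have hagree_low : ∀ v : V, (σ v : ℕ) < m - 3 * c → σs v = σ v := by
    intro v hv
    have hvP : v ∈ PP := hA v hv
    apply Fin.ext
    rw [hpos v]
    have heq : (univ.filter fun u => ord u < ord v)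
        = (univ.filter fun u => (σ u : ℕ) < (σ v : ℕ)) := by
      apply Finset.filter_congr
      intro u _
      rw [hordP v hvP]
      constructor
      · intro h
        by_cases huP : u ∈ PP
        · rwa [hordP u huP] at h
        · rw [hordN u huP] at h; have := (σ v).isLt; omega
      · intro h
        have huP : u ∈ PP := hA u (by omega)
        rwa [hordP u huP]
    rw [heq, sm_card_filter_lt σ (le_of_lt (σ v).isLt)]
  have hagree_high : ∀ v : V, m + 3 * c ≤ (σ v : ℕ) → σs v = σ v := by
    intro v hv
    have hvN : v ∉ PP := fun h => absurd (hB v h) (by omega)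
    apply Fin.ext
    rw [hpos v]
    have heq : (univ.filter fun u => ord u < ord v)
        = (univ.filter fun u => (σ u : ℕ) < (σ v : ℕ)) := by
      apply Finset.filter_congr
      intro u _
      rw [hordN v hvN]
      constructor
      · intro h
        by_cases huP : u ∈ PP
        · have := hB u huP; omega
        · rw [hordN u huP] at h; omega
      · intro h
        by_cases huP : u ∈ PP
        · rw [hordP u huP]; have := (σ u).isLt; omega
        · rw [hordN u huP]; omega
    rw [heq, sm_card_filter_lt σ (le_of_lt (σ v).isLt)]
  have hagree : ∀ j : Fin (Fintype.card V),
      ((j : ℕ) + 1 ≤ m - 3 * c ∨ m + 3 * c < (j : ℕ) + 1) → σs.symm j = σ.symm j := by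
    intro j hj
    have hv : σs (σ.symm j) = j := by
      rcases hj with hj | hj
      · have h := hagree_low (σ.symm j) (by rw [Equiv.apply_symm_apply]; omega)
        rw [h]; exact Equiv.apply_symm_apply σ j
      · have h := hagree_high (σ.symm j) (by rw [Equiv.apply_symm_apply]; omega)
        rw [h]; exact Equiv.apply_symm_apply σ j
    have h2 := congrArg σs.symm hv
    rw [Equiv.symm_apply_apply] at h2
    exact h2.symm
  have hwidth : widthOf E σs ≤ widthOf E σ := by
    apply Finset.sup_le
    intro i hi
    have hin : i ≤ Fintype.card V := by
      have := Finset.mem_range.mp hi; omega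
    have hcuteq : cutSize E σs i = (dIn E (prefixSet σs i)).card := by
      rw [cutSize, cutFinset_eq_dIn]
    rw [hcuteq]
    set X : Finset V := prefixSet σs i with hXdef
    have hmemX : ∀ v : V, v ∈ X ↔ (σs v : ℕ) < i := by
      intro v; simp [hXdef, prefixSet]
    by_cases hXPP : X = PP
    · rw [hXPP, hdPP]
      have h1 : cutSize E π m ≤ (dIn E (prefixSet σ m)).card := by
        apply sep
        · intro a ha
          simp only [prefixSet, Finset.mem_filter, Finset.mem_univ, true_and]
          exact hA' a ha
        · intro b hb
          simp only [prefixSet, Finset.mem_filter, Finset.mem_univ, true_and]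
          have := hB' b hb; omega
      have h1' : (cutFinset E π m).card ≤ (dIn E (prefixSet σ m)).card := h1
      have h2 : (dIn E (prefixSet σ m)).card = cutSize E σ m := by
        rw [cutSize, cutFinset_eq_dIn]
      have h3 : cutSize E σ m ≤ widthOf E σ := cutSize_le_width E σ hmn
      omega
    · by_cases him : i ≤ m
      · -- lower case : X = (prefixSet σ j) ∩ PP for the minimal σ-value j in PP \ X
        have hXsub : X ⊆ PP := by
          intro v hv
          by_contra hvn
          have h1 := hfact2 v hvn
          have h2 := (hmemX v).mp hv
          omega
        have hne : (PP \ X).Nonempty := by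
          rw [Finset.sdiff_nonempty]
          intro hcon
          exact hXPP (Finset.Subset.antisymm hXsub hcon)
        obtain ⟨v₀, hv₀mem, hv₀min⟩ :=
          Finset.exists_min_image (PP \ X) (fun v => (σ v : ℕ)) hne
        have hv₀PP : v₀ ∈ PP := (Finset.mem_sdiff.mp hv₀mem).1
        have hv₀X : v₀ ∉ X := (Finset.mem_sdiff.mp hv₀mem).2
        have hjn : (σ v₀ : ℕ) ≤ Fintype.card V := le_of_lt (σ v₀).isLt
        have hXQ : X = (prefixSet σ (σ v₀ : ℕ)) ∩ PP := by
          ext x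
          simp only [Finset.mem_inter, prefixSet, Finset.mem_filter, Finset.mem_univ, true_and]
          constructor
          · intro hx
            have hxP := hXsub hx
            have h1 : (σs x : ℕ) < i := (hmemX x).mp hx
            have h2 : i ≤ (σs v₀ : ℕ) := le_of_not_gt (fun h => hv₀X ((hmemX v₀).mpr h))
            have h3 : ord x < ord v₀ := by
              rw [← hσs_lt x v₀, Fin.lt_def]
              omega
            rw [hordP x hxP, hordP v₀ hv₀PP] at h3
            exact ⟨h3, hxP⟩
          · rintro ⟨hxj, hxP⟩
            by_contra hxX
            have := hv₀min x (Finset.mem_sdiff.mpr ⟨hxP, hxX⟩)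
            omega
        have hBQ : ∀ s : V, m + 3 * c ≤ (π s : ℕ) → ¬ ((σ s : ℕ) < (σ v₀ : ℕ)) := by
          intro s hs hsj
          apply sm_inv_lemma E hsc π σ hπc hσ (u := v₀) (w := s)
          · have : (π v₀ : ℕ) < m := (hmemPP v₀).mp hv₀PP
            omega
          · exact hsj
        have hsep : cutSize E π m ≤ (dIn E ((prefixSet σ (σ v₀ : ℕ)) ∪ PP)).card := by
          apply sep
          · intro a ha
            apply Finset.mem_union_right
            rw [hmemPP]; omega
          · intro b hb
            rw [Finset.mem_union]
            rintro (h | h)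
            · simp only [prefixSet, Finset.mem_filter, Finset.mem_univ, true_and] at h
              exact hBQ b hb h
            · rw [hmemPP] at h; omega
        have hsubmod := dIn_submod E (prefixSet σ (σ v₀ : ℕ)) PP
        rw [hdPP] at hsubmod
        have hsep' : (cutFinset E π m).card
            ≤ (dIn E ((prefixSet σ (σ v₀ : ℕ)) ∪ PP)).card := hsep
        have hdQ : (dIn E (prefixSet σ (σ v₀ : ℕ))).card = cutSize E σ (σ v₀ : ℕ) := by
          rw [cutSize, cutFinset_eq_dIn]
        have hwσ : cutSize E σ (σ v₀ : ℕ) ≤ widthOf E σ := cutSize_le_width E σ hjn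
        rw [hXQ]
        omega
      · -- upper case : X = (prefixSet σ j) ∪ PP for j := max σ-value in X \ PP, plus one
        push_neg at him
        have hPX : PP ⊆ X := by
          intro v hv
          exact (hmemX v).mpr (lt_of_lt_of_le (hfact1 v hv) (le_of_lt him))
        have hne : (X \ PP).Nonempty := by
          rw [Finset.sdiff_nonempty]
          intro hcon
          exact hXPP (Finset.Subset.antisymm hcon hPX)
        obtain ⟨v₁, hv₁mem, hv₁max⟩ :=
          Finset.exists_max_image (X \ PP) (fun v => (σ v : ℕ)) hne
        have hv₁X : v₁ ∈ X := (Finset.mem_sdiff.mp hv₁mem).1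
        have hv₁PP : v₁ ∉ PP := (Finset.mem_sdiff.mp hv₁mem).2
        have hjn : (σ v₁ : ℕ) + 1 ≤ Fintype.card V := (σ v₁).isLt
        have hXQ : X = (prefixSet σ ((σ v₁ : ℕ) + 1)) ∪ PP := by
          ext x
          simp only [Finset.mem_union, prefixSet, Finset.mem_filter, Finset.mem_univ, true_and]
          constructor
          · intro hx
            by_cases hxP : x ∈ PP
            · exact Or.inr hxP
            · left
              have := hv₁max x (Finset.mem_sdiff.mpr ⟨hx, hxP⟩)
              omega
          · rintro (hxj | hxP)
            · by_contra hxX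
              have hxP : x ∉ PP := fun h => hxX (hPX h)
              have h1 : (σs v₁ : ℕ) < i := (hmemX v₁).mp hv₁X
              have h2 : i ≤ (σs x : ℕ) := le_of_not_gt (fun h => hxX ((hmemX x).mpr h))
              have h3 : ord v₁ < ord x := by
                rw [← hσs_lt v₁ x, Fin.lt_def]
                omega
              rw [hordN v₁ hv₁PP, hordN x hxP] at h3
              omega
            · exact hPX hxP
        have hAQ : ∀ a : V, (π a : ℕ) < m - 3 * c → (σ a : ℕ) < (σ v₁ : ℕ) + 1 := by
          intro a ha
          by_contra hno
          push_neg at hno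
          apply sm_inv_lemma E hsc π σ hπc hσ (u := a) (w := v₁)
          · have : m ≤ (π v₁ : ℕ) := by
              by_contra hlt2
              push_neg at hlt2
              exact hv₁PP ((hmemPP v₁).mpr hlt2)
            omega
          · omega
        have hsep : cutSize E π m
            ≤ (dIn E ((prefixSet σ ((σ v₁ : ℕ) + 1)) ∩ PP)).card := by
          apply sep
          · intro a ha
            rw [Finset.mem_inter]
            constructor
            · simp only [prefixSet, Finset.mem_filter, Finset.mem_univ, true_and]
              exact hAQ a ha
            · rw [hmemPP]; omega
          · intro b hb
            rw [Finset.mem_inter]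
            rintro ⟨-, h⟩
            rw [hmemPP] at h; omega
        have hsubmod := dIn_submod E (prefixSet σ ((σ v₁ : ℕ) + 1)) PP
        rw [hdPP] at hsubmod
        have hsep' : (cutFinset E π m).card
            ≤ (dIn E ((prefixSet σ ((σ v₁ : ℕ) + 1)) ∩ PP)).card := hsep
        have hdQ : (dIn E (prefixSet σ ((σ v₁ : ℕ) + 1))).card
            = cutSize E σ ((σ v₁ : ℕ) + 1) := by
          rw [cutSize, cutFinset_eq_dIn]
        have hwσ : cutSize E σ ((σ v₁ : ℕ) + 1) ≤ widthOf E σ := cutSize_le_width E σ hjn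
        rw [hXQ]
        omega
  exact ⟨σs, hpre, hagree, hwidth⟩
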